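/- Let A be a ∀⁺ type of system F, let A* be a simple type obtained from A by erasing all quantifiers (assuming all bound type variables of A have distinct names), and let t be a β-normal λ-term. If ⊢_F t : A then ⊢_S t : A* in the simply typed system S. -/

import Mathlib

set_option maxHeartbeats 1000000


/-- Untyped λ-terms in de Bruijn representation. -/
inductive Trm : Type
  | var : ℕ → Trm
  | app : Trm → Trm → Trm
  | lam : Trm → Trm
  deriving DecidableEq

namespace Trm

/-- The set of free variables of a term (as de Bruijn indices). -/
def fv : Trm → Set ℕ
  | var n => {n}
  | app u v => fv u ∪ fv v
  | lam u => {n | n + 1 ∈ fv u}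

/-- A term is closed if it has no free variables. -/
def Closed (t : Trm) : Prop := fv t = ∅

/-- λI-terms: abstraction is allowed only on variables occurring free in the body. -/
inductive IsLI : Trm → Prop
  | var (n : ℕ) : IsLI (var n)
  | app {u v : Trm} : IsLI u → IsLI v → IsLI (app u v)
  | lam {u : Trm} : IsLI u → 0 ∈ fv u → IsLI (lam u)

/-- Lifting of free variables ≥ d. -/
def lift (d : ℕ) : Trm → Trm
  | var n => if n < d then var n else var (n + 1)
  | app u v => app (lift d u) (lift d v)
  | lam u => lam (lift (d + 1) u)

def liftTimes (k : ℕ) (t : Trm) : Trm := (lift 0)^[k] t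

/-- Capture-avoiding substitution of the k-th free variable. -/
def subst : Trm → ℕ → Trm → Trm
  | var n, k, v => if n < k then var n else if n = k then liftTimes k v else var (n - 1)
  | app a b, k, v => app (subst a k v) (subst b k v)
  | lam a, k, v => lam (subst a (k + 1) v)

end Trm

/-- One step of β-reduction. -/
inductive Beta : Trm → Trm → Prop
  | beta {u v : Trm} : Beta (.app (.lam u) v) (u.subst 0 v)
  | appL {u u' v : Trm} : Beta u u' → Beta (.app u v) (.app u' v)
  | appR {u v v' : Trm} : Beta v v' → Beta (.app u v) (.app u v')
  | lam {u u' : Trm} : Beta u u' → Beta (.lam u) (.lam u')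

/-- One step of η-reduction: λx (u)x → u when x ∉ Fv(u). -/
inductive Eta : Trm → Trm → Prop
  | eta (u : Trm) : Eta (.lam (.app (u.lift 0) (.var 0))) u
  | appL {u u' v : Trm} : Eta u u' → Eta (.app u v) (.app u' v)
  | appR {u v v' : Trm} : Eta v v' → Eta (.app u v) (.app u v')
  | lam {u u' : Trm} : Eta u u' → Eta (.lam u) (.lam u')

/-- β-reduction (reflexive-transitive closure). -/
def BetaStar : Trm → Trm → Prop := Relation.ReflTransGen Beta

/-- βη-reduction (reflexive-transitive closure of the union of β and η). -/
def BetaEtaStar : Trm → Trm → Prop := Relation.ReflTransGen (fun a b => Beta a b ∨ Eta a b)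

/-- η-reduction (reflexive-transitive closure). -/
def EtaStar : Trm → Trm → Prop := Relation.ReflTransGen Eta

/-- A term is β-normal iff it contains no β-redex. -/
def BetaNormal (t : Trm) : Prop := ∀ u, ¬ Beta t u

/-- A term is βη-normal iff it contains neither a β-redex nor an η-redex. -/
def BetaEtaNormal (t : Trm) : Prop := ∀ u, ¬ Beta t u ∧ ¬ Eta t u

/-- A term is strongly normalizable iff every β-reduction sequence from it is finite. -/
def StronglyNormalizable (t : Trm) : Prop :=
  ¬ ∃ f : ℕ → Trm, f 0 = t ∧ ∀ n, Beta (f n) (f (n + 1))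

/-- Types of system F in de Bruijn representation. -/
inductive Ty : Type
  | var : ℕ → Ty
  | arr : Ty → Ty → Ty
  | all : Ty → Ty
  deriving DecidableEq

namespace Ty

/-- Free type variables. -/
def tfv : Ty → Set ℕ
  | var n => {n}
  | arr A B => tfv A ∪ tfv B
  | all A => {n | n + 1 ∈ tfv A}

/-- Lifting of free type variables ≥ d. -/
def tlift (d : ℕ) : Ty → Ty
  | var n => if n < d then var n else var (n + 1)
  | arr A B => arr (tlift d A) (tlift d B)
  | all A => all (tlift (d + 1) A)

def tliftTimes (k : ℕ) (A : Ty) : Ty := (tlift 0)^[k] A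

/-- Substitution of the k-th free type variable. -/
def tsubst : Ty → ℕ → Ty → Ty
  | var n, k, G => if n < k then var n else if n = k then tliftTimes k G else var (n - 1)
  | arr A B, k, G => arr (tsubst A k G) (tsubst B k G)
  | all A, k, G => all (tsubst A (k + 1) G)

/-- Proper types: in every subtype ∀X E, the variable X occurs free in E. -/
def Proper : Ty → Prop
  | var _ => True
  | arr A B => Proper A ∧ Proper B
  | all A => Proper A ∧ 0 ∈ tfv A

/-- Closed types. -/
def ClosedTy (A : Ty) : Prop := tfv A = ∅

end Ty

/-- Typing judgments of system F (restricted to proper types: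
the rule (∀e) requires X free in A and instantiates at proper types only). -/
inductive Typing : List Ty → Trm → Ty → Prop
  | ax {Γ : List Ty} {n : ℕ} {A : Ty} :
      Γ[n]? = some A → (∀ B ∈ Γ, B.Proper) → Typing Γ (.var n) A
  | arrI {Γ : List Ty} {A B : Ty} {t : Trm} :
      A.Proper → Typing (A :: Γ) t B → Typing Γ (.lam t) (.arr A B)
  | arrE {Γ : List Ty} {A B : Ty} {u v : Trm} :
      Typing Γ u (.arr A B) → Typing Γ v A → Typing Γ (.app u v) B
  | allI {Γ : List Ty} {A : Ty} {t : Trm} :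
      0 ∈ Ty.tfv A → Typing (Γ.map (Ty.tlift 0)) t A → Typing Γ t (.all A)
  | allE {Γ : List Ty} {A : Ty} {t : Trm} (G : Ty) :
      G.Proper → 0 ∈ Ty.tfv A → Typing Γ t (.all A) → Typing Γ t (A.tsubst 0 G)

mutual
  /-- ∀-positive types: every second-order quantifier occurs positively. -/
  inductive PosT : Ty → Prop
    | var (n : ℕ) : PosT (.var n)
    | arr {A B : Ty} : NegT A → PosT B → PosT (.arr A B)
    | all {A : Ty} : PosT A → 0 ∈ Ty.tfv A → PosT (.all A)
  /-- ∀-negative types. -/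
  inductive NegT : Ty → Prop
    | var (n : ℕ) : NegT (.var n)
    | arr {A B : Ty} : PosT A → NegT B → NegT (.arr A B)
end

/-- Simple types (system S). -/
inductive STy : Type
  | var : ℕ → STy
  | arr : STy → STy → STy
  deriving DecidableEq

/-- Typing judgments of the simple system S: rules (ax), (→i), (→e) only. -/
inductive STyping : List STy → Trm → STy → Prop
  | ax {Γ : List STy} {n : ℕ} {A : STy} : Γ[n]? = some A → STyping Γ (.var n) A
  | arrI {Γ : List STy} {A B : STy} {t : Trm} :
      STyping (A :: Γ) t B → STyping Γ (.lam t) (.arr A B)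
  | arrE {Γ : List STy} {A B : STy} {u v : Trm} :
      STyping Γ u (.arr A B) → STyping Γ v A → STyping Γ (.app u v) B

/-- Erasing all quantifiers of a system F type, giving pairwise distinct fresh names
(odd numbers, numbered by a counter c) to the bound type variables and the name 2n to
the free type variable n, so that all type variables used get distinct names.
The resulting simple type is the canonical element of 𝒮_A. -/
def eraseAux : (ℕ → ℕ) → ℕ → Ty → STy × ℕ
  | f, c, .var n => (.var (f n), c)
  | f, c, .arr A B =>
      let p := eraseAux f c A
      let q := eraseAux f p.2 B
      (.arr p.1 q.1, q.2)
  | f, c, .all A =>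
      eraseAux (fun k => match k with | 0 => 2 * c + 1 | m + 1 => f m) (c + 1) A

/-- A* : the simple type obtained from A by erasing all quantifiers (with all
type variables distinctly named). -/
def erase (A : Ty) : STy := (eraseAux (fun n => 2 * n) 0 A).1

namespace Ty

lemma tlift_comm (A : Ty) : ∀ d e, e ≤ d → tlift e (tlift d A) = tlift (d+1) (tlift e A) := by
  induction A with
  | var n =>
    intro d e h
    simp only [tlift]
    split_ifs <;> simp only [tlift] <;> split_ifs <;> simp_all <;> omega
  | arr A B ihA ihB => intro d e h; simp only [tlift, ihA d e h, ihB d e h]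
  | all A ih => intro d e h; simp only [tlift, ih (d+1) (e+1) (by omega)]

lemma tliftTimes_succ (G : Ty) (k : ℕ) : tliftTimes (k+1) G = tlift 0 (tliftTimes k G) :=
  Function.iterate_succ_apply' _ _ _

lemma tlift_tliftTimes (G : Ty) : ∀ k d, d ≤ k → tlift d (tliftTimes k G) = tliftTimes (k+1) G := by
  intro k
  induction k with
  | zero => intro d h; interval_cases d; rfl
  | succ k ih =>
    intro d h
    rcases Nat.eq_zero_or_pos d with h0 | h0
    · subst h0; exact (tliftTimes_succ _ (k+1)).symm
    · rw [tliftTimes_succ, show d = (d-1)+1 by omega, ← tlift_comm _ (d-1) 0 (by omega),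
        ih (d-1) (by omega), ← tliftTimes_succ]

lemma tlift_tsubst (A : Ty) : ∀ k d G, d ≤ k → tlift d (tsubst A k G) = tsubst (tlift d A) (k+1) G := by
  induction A with
  | var n =>
    intro k d G h
    rcases Nat.lt_trichotomy n k with h1 | h1 | h1
    · rcases Nat.lt_or_ge n d with h2 | h2
      · simp [tsubst, tlift, h1, h2, show n < k + 1 by omega]
      · simp [tsubst, tlift, h1, show ¬ n < d by omega, show n + 1 < k + 1 by omega]
    · subst h1
      simp [tsubst, tlift, show ¬ n < n by omega, show ¬ n < d by omega,
        show ¬ n + 1 < n + 1 by omega]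
      exact tlift_tliftTimes G n d h
    · simp [tsubst, tlift, show ¬ n < k by omega, show n ≠ k by omega,
        show ¬ n - 1 < d by omega, show ¬ n + 1 < k + 1 by omega, show n + 1 ≠ k + 1 by omega,
        show ¬ n < d by omega, show n - 1 + 1 = n by omega]
  | arr A B ihA ihB => intro k d G h; simp only [tsubst, tlift, ihA k d G h, ihB k d G h]
  | all A ih => intro k d G h; simp only [tsubst, tlift, ih (k+1) (d+1) G (by omega)]

lemma tsubst_tlift_cancel (A : Ty) : ∀ d G, tsubst (tlift d A) d G = A := by
  induction A with
  | var n =>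
    intro d G; simp only [tlift]
    split_ifs <;> simp only [tsubst] <;> split_ifs <;> first | (simp_all; omega) | omega | simp_all
  | arr A B ihA ihB => intro d G; simp only [tlift, tsubst, ihA, ihB]
  | all A ih => intro d G; simp only [tlift, tsubst, ih]

lemma tliftTimes_tsubst (H : Ty) : ∀ j k G, j ≤ k → tsubst (tliftTimes j H) k G = tliftTimes j (tsubst H (k - j) G) := by
  intro j
  induction j with
  | zero => intro k G h; simp [tliftTimes]
  | succ j ih =>
    intro k G h
    rw [tliftTimes_succ, show k - (j+1) = k-1-j by omega]
    conv_lhs => rw [show k = (k-1)+1 by omega]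
    rw [← tlift_tsubst _ (k-1) 0 G (by omega), ih (k-1) G (by omega), tliftTimes_succ]

lemma tliftTimes_tsubst_cancel (G : Ty) : ∀ k j H, j ≤ k → tsubst (tliftTimes (k+1) G) j H = tliftTimes k G := by
  intro k j H h
  rw [← tlift_tliftTimes G k j h, tsubst_tlift_cancel]

lemma tsubst_tsubst (A : Ty) : ∀ j k H G, j ≤ k →
    tsubst (tsubst A j H) k G = tsubst (tsubst A (k+1) G) j (tsubst H (k-j) G) := by
  induction A with
  | var n =>
    intro j k H G h
    rcases Nat.lt_trichotomy n j with h1 | h1 | h1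
    · simp [tsubst, h1, show n < k by omega, show n < k + 1 by omega]
    · subst h1
      simp [tsubst, show ¬ n < n by omega, show n < k + 1 by omega]
      exact tliftTimes_tsubst H n k G h
    · rcases Nat.lt_trichotomy n (k+1) with h2 | h2 | h2
      · simp [tsubst, show ¬ n < j by omega, show n ≠ j by omega, h2,
          show n - 1 < k by omega]
      · subst h2
        simp [tsubst, show ¬ k + 1 < j by omega, show k + 1 ≠ j by omega,
          show ¬ k + 1 < k + 1 by omega, show ¬ k < k by omega, show k + 1 - 1 = k by omega]
        exact (tliftTimes_tsubst_cancel G k j _ h).symm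
      · simp [tsubst, show ¬ n < j by omega, show n ≠ j by omega,
          show ¬ n - 1 < k by omega, show n - 1 ≠ k by omega, show ¬ n < k + 1 by omega,
          show n ≠ k + 1 by omega, show ¬ n - 1 < j by omega, show n - 1 ≠ j by omega]
  | arr A B ihA ihB => intro j k H G h; simp only [tsubst, ihA j k H G h, ihB j k H G h]
  | all A ih =>
    intro j k H G h
    simp only [tsubst, ih (j+1) (k+1) H G (by omega), show k + 1 - (j+1) = k - j by omega]

end Ty
namespace Ty

lemma mem_tfv_tlift (A : Ty) : ∀ m d, m < d → m ∈ tfv A → m ∈ tfv (tlift d A) := by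
  induction A with
  | var n =>
    intro m d h hm
    simp only [tfv, Set.mem_singleton_iff] at hm
    subst hm
    simp [tlift, h, tfv]
  | arr A B ihA ihB =>
    intro m d h hm
    simp only [tfv, Set.mem_union] at hm ⊢
    rcases hm with hm | hm
    · exact Or.inl (ihA m d h hm)
    · exact Or.inr (ihB m d h hm)
  | all A ih =>
    intro m d h hm
    simp only [tfv, Set.mem_setOf_eq] at hm ⊢
    exact ih (m+1) (d+1) (by omega) hm

lemma mem_tfv_tsubst (A : Ty) : ∀ m k G, m < k → m ∈ tfv A → m ∈ tfv (tsubst A k G) := by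
  induction A with
  | var n =>
    intro m k G h hm
    simp only [tfv, Set.mem_singleton_iff] at hm
    subst hm
    simp [tsubst, h, tfv]
  | arr A B ihA ihB =>
    intro m k G h hm
    simp only [tfv, Set.mem_union] at hm ⊢
    rcases hm with hm | hm
    · exact Or.inl (ihA m k G h hm)
    · exact Or.inr (ihB m k G h hm)
  | all A ih =>
    intro m k G h hm
    simp only [tfv, Set.mem_setOf_eq] at hm ⊢
    exact ih (m+1) (k+1) G (by omega) hm

lemma Proper.tlift_ (A : Ty) : ∀ d, Proper A → Proper (tlift d A) := by
  induction A with
  | var n => intro d _; simp only [tlift]; split_ifs <;> trivial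
  | arr A B ihA ihB => intro d h; exact ⟨ihA d h.1, ihB d h.2⟩
  | all A ih =>
    intro d h
    exact ⟨ih (d+1) h.1, mem_tfv_tlift A 0 (d+1) (by omega) h.2⟩

lemma Proper.tliftTimes_ (G : Ty) : ∀ k, Proper G → Proper (tliftTimes k G) := by
  intro k hG
  induction k with
  | zero => exact hG
  | succ k ih => rw [tliftTimes_succ]; exact Proper.tlift_ _ 0 ih

lemma Proper.tsubst_ (A : Ty) : ∀ k G, Proper A → Proper G → Proper (tsubst A k G) := by
  induction A with
  | var n =>
    intro k G _ hG
    simp only [tsubst]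
    split_ifs <;> first | trivial | exact Proper.tliftTimes_ G k hG
  | arr A B ihA ihB => intro k G h hG; exact ⟨ihA k G h.1 hG, ihB k G h.2 hG⟩
  | all A ih =>
    intro k G h hG
    exact ⟨ih (k+1) G h.1 hG, mem_tfv_tsubst A 0 (k+1) G (by omega) h.2⟩

end Ty

lemma PosT_tlift (A : Ty) : ∀ d, (PosT A → PosT (A.tlift d)) ∧ (NegT A → NegT (A.tlift d)) := by
  induction A with
  | var n =>
    intro d
    constructor <;> intro _ <;> simp only [Ty.tlift] <;> split_ifs <;>
      first | exact PosT.var _ | exact NegT.var _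
  | arr A B ihA ihB =>
    intro d
    constructor
    · intro h
      cases h with
      | arr hA hB => exact PosT.arr ((ihA d).2 hA) ((ihB d).1 hB)
    · intro h
      cases h with
      | arr hA hB => exact NegT.arr ((ihA d).1 hA) ((ihB d).2 hB)
  | all A ih =>
    intro d
    constructor
    · intro h
      cases h with
      | all hA hfv =>
        exact PosT.all ((ih (d+1)).1 hA) (Ty.mem_tfv_tlift A 0 (d+1) (by omega) hfv)
    · intro h; cases h
/-- Normalized typing derivations: flag `true` = neutral (spine) mode. -/
inductive NT : Bool → List Ty → Trm → Ty → Prop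
  | ax {Γ n A} : Γ[n]? = some A → (∀ B ∈ Γ, B.Proper) → NT true Γ (.var n) A
  | arrE {Γ e u A B} : NT true Γ e (.arr A B) → NT false Γ u A → NT true Γ (.app e u) B
  | allE {Γ e A} (G : Ty) : G.Proper → 0 ∈ Ty.tfv A → NT true Γ e (.all A) →
      NT true Γ e (A.tsubst 0 G)
  | neu {Γ e A} : NT true Γ e A → NT false Γ e A
  | arrI {Γ u A B} : A.Proper → NT false (A :: Γ) u B → NT false Γ (.lam u) (.arr A B)
  | allI {Γ t A} : 0 ∈ Ty.tfv A → NT false (Γ.map (Ty.tlift 0)) t A → NT false Γ t (.all A)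

/-- Substitution of a proper type into a normalized derivation. -/
lemma NT.tsubst_ {b Γ t A} (h : NT b Γ t A) :
    ∀ k G, Ty.Proper G → NT b (Γ.map (fun B => B.tsubst k G)) t (A.tsubst k G) := by
  induction h with
  | ax hget hp =>
    intro k G hG
    exact NT.ax (by simp [hget]) (by
      intro B hB
      simp only [List.mem_map] at hB
      obtain ⟨C, hC, rfl⟩ := hB
      exact Ty.Proper.tsubst_ C k G (hp C hC) hG)
  | arrE _ _ ihe ihu =>
    intro k G hG
    exact NT.arrE (ihe k G hG) (ihu k G hG)
  | allE G₀ hG₀ hfv _ ih =>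
    intro k G hG
    rw [Ty.tsubst_tsubst _ 0 k G₀ G (by omega)]
    exact NT.allE _ (Ty.Proper.tsubst_ G₀ (k-0) G hG₀ hG)
      (Ty.mem_tfv_tsubst _ 0 (k+1) G (by omega) hfv) (ih k G hG)
  | neu _ ih => intro k G hG; exact NT.neu (ih k G hG)
  | arrI hA _ ih =>
    intro k G hG
    exact NT.arrI (Ty.Proper.tsubst_ _ k G hA hG) (ih k G hG)
  | allI hfv _ ih =>
    intro k G hG
    apply NT.allI (Ty.mem_tfv_tsubst _ 0 (k+1) G (by omega) hfv)
    have := ih (k+1) G hG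
    rw [List.map_map] at this
    rw [List.map_map]
    have heq : ((fun B => Ty.tsubst B (k+1) G) ∘ Ty.tlift 0)
        = (Ty.tlift 0 ∘ fun B => Ty.tsubst B k G) := by
      funext B
      simp only [Function.comp_apply]
      exact (Ty.tlift_tsubst B k 0 G (by omega)).symm
    rw [← heq]
    exact this

lemma BetaNormal.of_lam {u : Trm} (h : BetaNormal (.lam u)) : BetaNormal u :=
  fun w hw => h (.lam w) (Beta.lam hw)

lemma BetaNormal.of_app_left {u v : Trm} (h : BetaNormal (.app u v)) : BetaNormal u :=
  fun w hw => h (.app w v) (Beta.appL hw)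

lemma BetaNormal.of_app_right {u v : Trm} (h : BetaNormal (.app u v)) : BetaNormal v :=
  fun w hw => h (.app u w) (Beta.appR hw)

lemma BetaNormal.not_lam {u v : Trm} (h : BetaNormal (.app u v)) : ∀ w, u ≠ .lam w := by
  rintro w rfl
  exact (h _ Beta.beta).elim

lemma NT.of_arr_not_lam {Γ u A B} (h : NT false Γ u (.arr A B)) (hne : ∀ w, u ≠ .lam w) :
    NT true Γ u (.arr A B) := by
  cases h with
  | neu h => exact h
  | arrI _ _ => exact absurd rfl (hne _)

lemma NT.inst {Γ t A} (h : NT false Γ t (.all A)) (G : Ty) (hG : G.Proper)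
    (hfv : 0 ∈ Ty.tfv A) : NT false Γ t (A.tsubst 0 G) := by
  cases h with
  | neu h => exact NT.neu (NT.allE G hG hfv h)
  | allI _ h =>
    have := NT.tsubst_ h 0 G hG
    rw [List.map_map] at this
    have heq : ((fun B => Ty.tsubst B 0 G) ∘ Ty.tlift 0) = id := by
      funext B
      exact Ty.tsubst_tlift_cancel B 0 G
    rw [heq, List.map_id] at this
    exact this

/-- Normalization of typing derivations for β-normal terms. -/
lemma Typing.toNT {Γ t A} (h : Typing Γ t A) (hn : BetaNormal t) : NT false Γ t A := by
  induction h with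
  | ax hget hp => exact NT.neu (NT.ax hget hp)
  | arrI hA _ ih => exact NT.arrI hA (ih hn.of_lam)
  | arrE hu hv ihu ihv =>
    exact NT.neu (NT.arrE (NT.of_arr_not_lam (ihu hn.of_app_left) hn.not_lam)
      (ihv hn.of_app_right))
  | allI hfv _ ih => exact NT.allI hfv (ih hn)
  | allE G hG hfv _ ih => exact NT.inst (ih hn) G hG hfv
/-- Prepend a simple type to an environment. -/
def consS (U : STy) (ρ : ℕ → STy) : ℕ → STy
  | 0 => U
  | n + 1 => ρ n

/-- Insert a simple type at position d of an environment. -/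
def insS (d : ℕ) (U : STy) (ρ : ℕ → STy) : ℕ → STy :=
  fun n => if n < d then ρ n else if n = d then U else ρ (n - 1)

lemma insS_zero (U : STy) (ρ : ℕ → STy) : insS 0 U ρ = consS U ρ := by
  funext n
  cases n <;> simp [insS, consS]

lemma insS_succ_cons (d : ℕ) (U U' : STy) (ρ : ℕ → STy) :
    insS (d+1) U (consS U' ρ) = consS U' (insS d U ρ) := by
  funext n
  match n with
  | 0 => simp [insS, consS]
  | n + 1 =>
    simp only [insS, consS]
    rcases Nat.lt_trichotomy n d with h | h | h
    · simp [h, show n + 1 < d + 1 by omega]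
    · subst h; simp
    · obtain ⟨m, rfl⟩ : ∃ m, n = m + 1 := ⟨n - 1, by omega⟩
      simp [show ¬ m + 1 + 1 < d + 1 by omega, show ¬ m + 1 < d by omega,
        show m + 1 + 1 ≠ d + 1 by omega, show m + 1 ≠ d by omega, consS]

/-- Polarity-directed erasure relation: `E true` for positive types,
`E false` for negative types. -/
inductive E : Bool → (ℕ → STy) → Ty → STy → Prop
  | var {b ρ n} : E b ρ (.var n) (ρ n)
  | arr {b ρ A B S T} : E (!b) ρ A S → E b ρ B T → E b ρ (.arr A B) (.arr S T)
  | all {ρ A S} (U : STy) : E true (consS U ρ) A S → E true ρ (.all A) S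

lemma E.weaken {b ρ A S} (h : E b ρ A S) : ∀ d U, E b (insS d U ρ) (A.tlift d) S := by
  induction h with
  | @var b ρ n =>
    intro d U
    simp only [Ty.tlift]
    split_ifs with h1
    · have : ρ n = insS d U ρ n := by simp [insS, h1]
      rw [this]; exact E.var
    · have : ρ n = insS d U ρ (n+1) := by
        simp [insS, show ¬ n + 1 < d by omega, show n + 1 ≠ d by omega]
      rw [this]; exact E.var
  | arr _ _ ihA ihB => intro d U; exact E.arr (ihA d U) (ihB d U)
  | all U' _ ih =>
    intro d U
    apply E.all U'
    rw [← insS_succ_cons]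
    exact ih (d+1) U

lemma E.uniq (A : Ty) : ∀ ρ S T, PosT A → NegT A → E true ρ A S → E false ρ A T → S = T := by
  induction A with
  | var n =>
    intro ρ S T _ _ h1 h2
    cases h1; cases h2; rfl
  | arr A B ihA ihB =>
    intro ρ S T hP hN h1 h2
    cases hP with | arr hPA hPB =>
    cases hN with | arr hNA hNB =>
    cases h1 with | arr hA1 hB1 =>
    cases h2 with | arr hA2 hB2 =>
    rw [ihA ρ _ _ hNA hPA hA2 hA1, ihB ρ _ _ hPB hNB hB1 hB2]
  | all A ih =>
    intro ρ S T _ hN _ _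
    cases hN

lemma forall₂_get {R : Ty → STy → Prop} :
    ∀ {l : List Ty} {l' : List STy}, List.Forall₂ R l l' →
      ∀ {n : ℕ} {a : Ty}, l[n]? = some a → ∃ b, l'[n]? = some b ∧ R a b := by
  intro l l' h
  induction h with
  | nil => intro n a ha; simp at ha
  | cons hr _ ih =>
    intro n a ha
    cases n with
    | zero =>
      simp only [List.getElem?_cons_zero, Option.some.injEq] at ha
      subst ha
      exact ⟨_, by simp, hr⟩
    | succ n =>
      simp only [List.getElem?_cons_succ] at ha ⊢
      exact ih ha

lemma main2 {b Γ t A} (h : NT b Γ t A) :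
    ∀ ρ Δ, List.Forall₂ (E false ρ) Γ Δ → (∀ B ∈ Γ, NegT B) →
      (b = true → NegT A ∧ ∃ T, E false ρ A T ∧ STyping Δ t T) ∧
      (b = false → PosT A → ∀ T, E true ρ A T → STyping Δ t T) := by
  induction h with
  | @ax Γ n A hget _ =>
    intro ρ Δ hF hNeg
    refine ⟨fun _ => ?_, fun hb => nomatch hb⟩
    obtain ⟨T, hT, hE⟩ := forall₂_get hF hget
    exact ⟨hNeg A (List.mem_of_getElem? hget), T, hE, STyping.ax hT⟩
  | @arrE Γ e u A B _ _ ihe ihu =>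
    intro ρ Δ hF hNeg
    refine ⟨fun _ => ?_, fun hb => nomatch hb⟩
    obtain ⟨hNarr, T, hET, hSTy⟩ := (ihe ρ Δ hF hNeg).1 rfl
    cases hNarr with | arr hPA hNB =>
    cases hET with | @arr _ _ _ _ S T' hES hET' =>
    exact ⟨hNB, T', hET', STyping.arrE hSTy ((ihu ρ Δ hF hNeg).2 rfl hPA S hES)⟩
  | allE G _ _ _ ih =>
    intro ρ Δ hF hNeg
    obtain ⟨hN, _⟩ := (ih ρ Δ hF hNeg).1 rfl
    cases hN
  | @neu Γ e A _ ih =>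
    intro ρ Δ hF hNeg
    refine ⟨(fun hb => nomatch hb), fun _ hP T hT => ?_⟩
    obtain ⟨hN, T', hET', hSTy⟩ := (ih ρ Δ hF hNeg).1 rfl
    rwa [E.uniq A ρ T T' hP hN hT hET']
  | @arrI Γ u A B _ _ ih =>
    intro ρ Δ hF hNeg
    refine ⟨(fun hb => nomatch hb), fun _ hP T hT => ?_⟩
    cases hP with | arr hNA hPB =>
    cases hT with | @arr _ _ _ _ S T' hES hET' =>
    exact STyping.arrI ((ih ρ (S :: Δ) (List.Forall₂.cons hES hF)
      (by intro B hB; rcases List.mem_cons.mp hB with rfl | hB; exacts [hNA, hNeg _ hB])).2 rfl hPB T' hET')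
  | @allI Γ t A _ _ ih =>
    intro ρ Δ hF hNeg
    refine ⟨(fun hb => nomatch hb), fun _ hP T hT => ?_⟩
    cases hP with | all hPA _ =>
    cases hT with | all U hT =>
    refine (ih (consS U ρ) Δ ?_ ?_).2 rfl hPA T hT
    · rw [← insS_zero]
      have : ∀ {l l'}, List.Forall₂ (E false ρ) l l' →
          List.Forall₂ (E false (insS 0 U ρ)) (l.map (Ty.tlift 0)) l' := by
        intro l l' hF
        induction hF with
        | nil => exact List.Forall₂.nil
        | cons hr _ ih => exact List.Forall₂.cons (hr.weaken 0 U) ih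
      exact this hF
    · intro B hB
      simp only [List.mem_map] at hB
      obtain ⟨C, hC, rfl⟩ := hB
      exact (PosT_tlift C 0).2 (hNeg C hC)

lemma eraseAux_erases (A : Ty) : ∀ (f : ℕ → ℕ) (c : ℕ),
    (PosT A → E true (fun n => .var (f n)) A (eraseAux f c A).1) ∧
    (NegT A → E false (fun n => .var (f n)) A (eraseAux f c A).1) := by
  induction A with
  | var n => intro f c; exact ⟨fun _ => E.var, fun _ => E.var⟩
  | arr A B ihA ihB =>
    intro f c
    constructor
    · intro h
      cases h with | arr hA hB =>
      exact E.arr ((ihA f c).2 hA) ((ihB f (eraseAux f c A).2).1 hB)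
    · intro h
      cases h with | arr hA hB =>
      exact E.arr ((ihA f c).1 hA) ((ihB f (eraseAux f c A).2).2 hB)
  | all A ih =>
    intro f c
    refine ⟨fun h => ?_, fun h => by cases h⟩
    cases h with | all hA _ =>
    apply E.all (STy.var (2 * c + 1))
    have heq : consS (STy.var (2 * c + 1)) (fun n => STy.var (f n))
        = (fun n => STy.var ((fun k => match k with | 0 => 2 * c + 1 | m + 1 => f m) n)) := by
      funext n
      cases n <;> rfl
    rw [heq]
    exact (ih _ (c+1)).1 hA

/-- if A is a ∀⁺ type of system F and t is β-normal with ⊢_F t : A,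
then ⊢_S t : A* in the simple system S. -/
theorem stmt14 (A : Ty) (hA : PosT A) (t : Trm) (hn : BetaNormal t)
    (h : Typing [] t A) : STyping [] t (erase A) := by
  have h1 : NT false [] t A := Typing.toNT h hn
  exact (main2 h1 (fun n => STy.var (2 * n)) [] List.Forall₂.nil (by simp)).2 rfl hA
    (erase A) ((eraseAux_erases A (fun n => 2 * n) 0).1 hA)
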